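/- Let Γ be a group in which every element has a finite conjugacy class. Then every finitely generated subgroup of Γ is virtually abelian (contains an abelian subgroup of finite index). -/

import Mathlib

lemma centralizer_finiteIndex {Γ : Type*} [Group Γ] (h : Γ)
    (hfc : (Set.range fun g : Γ => g * h * g⁻¹).Finite) :
    (Subgroup.centralizer {h}).FiniteIndex := by
  set C := Subgroup.centralizer {h}
  have key : ∀ g₁ g₂ : Γ, g₁ * h * g₁⁻¹ = g₂ * h * g₂⁻¹ ↔ (g₁⁻¹ * g₂) ∈ C := by
    intro g₁ g₂
    rw [Subgroup.mem_centralizer_singleton_iff]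
    constructor
    · intro hc
      have : h * (g₁⁻¹ * g₂) = g₁⁻¹ * (g₁ * h * g₁⁻¹) * g₂ := by group
      rw [this, hc]; group
    · intro hc
      have := calc g₂ * h * g₂⁻¹
          = g₁ * ((g₁⁻¹ * g₂) * h) * (g₁⁻¹ * g₂)⁻¹ * g₁⁻¹ := by group
        _ = g₁ * (h * (g₁⁻¹ * g₂)) * (g₁⁻¹ * g₂)⁻¹ * g₁⁻¹ := by rw [hc]
        _ = g₁ * h * g₁⁻¹ := by group
      exact this.symm
  have : Finite (Γ ⧸ C) := by
    have : ∀ g₁ g₂ : Γ, (QuotientGroup.mk g₁ : Γ ⧸ C) = QuotientGroup.mk g₂ ↔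
        g₁ * h * g₁⁻¹ = g₂ * h * g₂⁻¹ := by
      intro g₁ g₂
      rw [QuotientGroup.eq, key]
    have hfin : Finite (Set.range fun g : Γ => g * h * g⁻¹) := hfc
    refine Finite.of_injective (fun q => Quotient.liftOn' q
      (fun g => (⟨g * h * g⁻¹, Set.mem_range_self g⟩ :
        (Set.range fun g : Γ => g * h * g⁻¹)))
      ?_) ?_
    · intro a b hab
      exact Subtype.ext ((key a b).mpr (QuotientGroup.leftRel_apply.mp hab))
    · intro q₁ q₂
      induction q₁ using Quotient.inductionOn'
      induction q₂ using Quotient.inductionOn'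
      intro hq
      exact ((this _ _).mpr (congrArg Subtype.val hq))
  exact Subgroup.finiteIndex_of_finite_quotient

theorem stmt2 {Γ : Type*} [Group Γ]
    (hfc : ∀ h : Γ, (Set.range fun g : Γ => g * h * g⁻¹).Finite)
    (H : Subgroup Γ) (hH : H.FG) :
    ∃ A : Subgroup H, IsMulCommutative A ∧ A.FiniteIndex := by
  obtain ⟨S, hS⟩ := hH
  refine ⟨Subgroup.center H, inferInstance, ?_⟩
  set C : Subgroup Γ := ⨅ s ∈ S, Subgroup.centralizer {s} with hC
  have hCfi : C.FiniteIndex :=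
    Subgroup.finiteIndex_iInf' _ (fun s _ => centralizer_finiteIndex s (hfc s))
  have : (C.subgroupOf H).FiniteIndex := Subgroup.instFiniteIndex_subgroupOf C H
  refine Subgroup.finiteIndex_of_le (H := C.subgroupOf H) ?_
  intro x hx
  rw [Subgroup.mem_subgroupOf] at hx
  simp only [hC, Subgroup.mem_iInf] at hx
  rw [Subgroup.mem_center_iff]
  intro g
  have hgc : (g : Γ) ∈ Subgroup.centralizer {(x : Γ)} := by
    have h1 : Subgroup.closure (S : Set Γ) ≤ Subgroup.centralizer {(x : Γ)} := by
      rw [Subgroup.closure_le]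
      intro s hs
      rw [SetLike.mem_coe, Subgroup.mem_centralizer_singleton_iff]
      exact ((Subgroup.mem_centralizer_singleton_iff).mp (hx s hs)).symm
    exact (hS ▸ h1) g.2
  rw [Subgroup.mem_centralizer_singleton_iff] at hgc
  exact Subtype.ext hgc
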